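/- Norming functional: let X be a real linear 2-normed space, b ∈ X fixed, and x₀ a nonzero element of X with ‖x₀, b‖ ≠ 0. Then there exists a bounded b-linear functional T on X × ⟨b⟩ with ‖T‖ = 1 and T(x₀, b) = ‖x₀, b‖. -/
import Mathlib


open Filter Topology

/-- A linear 2-normed space structure (Gähler): a 2-norm on a real vector space. -/
structure TwoNorm (X : Type*) [AddCommGroup X] [Module ℝ X] where
  N : X → X → ℝ
  eq_zero_iff : ∀ x y, N x y = 0 ↔ ¬ LinearIndependent ℝ ![x, y]
  symm : ∀ x y, N x y = N y x
  smul_left : ∀ (a : ℝ) (x y : X), N (a • x) y = |a| * N x y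
  add_right : ∀ x y z : X, N x (y + z) ≤ N x y + N x z

variable {X : Type*} [AddCommGroup X] [Module ℝ X]

/-- Convergence of a sequence in a linear 2-normed space. -/
def TwoNorm.Conv (P : TwoNorm X) (x : ℕ → X) (l : X) : Prop :=
  ∀ y : X, Tendsto (fun n => P.N (x n - l) y) atTop (nhds 0)

/-- Cauchy sequence in a linear 2-normed space. -/
def TwoNorm.IsCauchySeq (P : TwoNorm X) (x : ℕ → X) : Prop :=
  ∀ z : X, Tendsto (fun p : ℕ × ℕ => P.N (x p.1 - x p.2) z) atTop (nhds 0)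

/-- A 2-Banach space: every Cauchy sequence converges. -/
def TwoNorm.Complete (P : TwoNorm X) : Prop :=
  ∀ x : ℕ → X, P.IsCauchySeq x → ∃ l, P.Conv x l

/-- A b-linear functional (identified with `x ↦ T (x, b)`, a linear map) is bounded. -/
def TwoNorm.BddB (P : TwoNorm X) (b : X) (T : X →ₗ[ℝ] ℝ) : Prop :=
  ∃ M : ℝ, 0 < M ∧ ∀ x, |T x| ≤ M * P.N x b

/-- Norm of a bounded b-linear functional. -/
noncomputable def TwoNorm.bNorm (P : TwoNorm X) (b : X) (T : X →ₗ[ℝ] ℝ) : ℝ :=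
  sInf {M : ℝ | 0 < M ∧ ∀ x, |T x| ≤ M * P.N x b}

/-- Boundedness of a b-linear functional defined on a subspace `W`. -/
def TwoNorm.BddBOn (P : TwoNorm X) (b : X) (W : Submodule ℝ X) (T : W →ₗ[ℝ] ℝ) : Prop :=
  ∃ M : ℝ, 0 < M ∧ ∀ x : W, |T x| ≤ M * P.N x b

/-- Norm of a bounded b-linear functional defined on a subspace `W`. -/
noncomputable def TwoNorm.bNormOn (P : TwoNorm X) (b : X) (W : Submodule ℝ X)
    (T : W →ₗ[ℝ] ℝ) : ℝ :=
  sInf {M : ℝ | 0 < M ∧ ∀ x : W, |T x| ≤ M * P.N x b}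

/-- Continuity at a point with respect to the open-ball topology of the 2-norm. -/
def TwoNorm.ContAt (P : TwoNorm X) (T : X →ₗ[ℝ] ℝ) (x₀ : X) : Prop :=
  ∀ ε > 0, ∃ (e : X) (δ : ℝ), 0 < δ ∧ ∀ x, P.N (x - x₀) e < δ → |T x - T x₀| < ε

section
variable {X : Type*} [AddCommGroup X] [Module ℝ X]

lemma TwoNorm_zero_right (P : TwoNorm X) (x : X) : P.N x 0 = 0 := by
  rw [P.eq_zero_iff]
  intro h
  exact (h.ne_zero 1) (by simp)

lemma TwoNorm_nonneg (P : TwoNorm X) (x y : X) : 0 ≤ P.N x y := by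
  have h1 : P.N y (x + (-1 : ℝ) • x) ≤ P.N y x + P.N y ((-1 : ℝ) • x) := P.add_right _ _ _
  have h2 : P.N y (x + (-1 : ℝ) • x) = 0 := by
    simp only [neg_smul, one_smul, add_neg_cancel]; exact TwoNorm_zero_right P y
  have h3 : P.N y ((-1 : ℝ) • x) = P.N y x := by
    rw [P.symm, P.smul_left, P.symm]; simp
  rw [P.symm]; linarith

end


theorem stmt15 (P : TwoNorm X) (b : X) (x₀ : X) (h0 : x₀ ≠ 0)
    (hb : P.N x₀ b ≠ 0) :
    ∃ T : X →ₗ[ℝ] ℝ, P.BddB b T ∧ P.bNorm b T = 1 ∧ T x₀ = P.N x₀ b := by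
  have hpos : 0 < P.N x₀ b := lt_of_le_of_ne (TwoNorm_nonneg P x₀ b) (Ne.symm hb)
  -- the partial functional on span {x₀}
  set f : X →ₗ.[ℝ] ℝ := LinearPMap.mkSpanSingleton' x₀ (P.N x₀ b)
    (fun c hc => by
      rcases eq_or_ne c 0 with rfl | hc0
      · simp
      · rcases smul_eq_zero.mp hc with h|h; exacts [absurd h hc0, absurd h h0]) with hf_def
  have hdom : f.domain = Submodule.span ℝ {x₀} := LinearPMap.domain_mkSpanSingleton _ _ _
  have hN_hom : ∀ c : ℝ, 0 < c → ∀ x, P.N (c • x) b = c * P.N x b := by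
    intro c hc x; rw [P.smul_left, abs_of_pos hc]
  have hN_add : ∀ x y : X, P.N (x + y) b ≤ P.N x b + P.N y b := by
    intro x y
    rw [P.symm x b, P.symm y b, P.symm _ b]
    exact P.add_right b x y
  have hf : ∀ x : f.domain, f x ≤ P.N x b := by
    rintro ⟨x, hx⟩
    rw [hdom, Submodule.mem_span_singleton] at hx
    obtain ⟨c, rfl⟩ := hx
    rw [LinearPMap.mkSpanSingleton'_apply]
    rw [P.smul_left]
    calc c * P.N x₀ b ≤ |c| * P.N x₀ b :=
      mul_le_mul_of_nonneg_right (le_abs_self c) (TwoNorm_nonneg P x₀ b)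
    _ = |c| * P.N x₀ b := rfl
  obtain ⟨g, hg_eq, hg_le⟩ := exists_extension_of_le_sublinear f (fun x => P.N x b) hN_hom hN_add hf
  have habs : ∀ x, |g x| ≤ P.N x b := by
    intro x
    rcases abs_cases (g x) with ⟨h, _⟩ | ⟨h, _⟩
    · rw [h]; exact hg_le x
    · rw [h]
      have := hg_le (-x)
      have hnx : P.N (-x) b = P.N x b := by
        rw [show (-x : X) = (-1 : ℝ) • x by simp, P.smul_left]; simp
      simp only [map_neg] at this
      linarith
  have hgx₀ : g x₀ = P.N x₀ b := by
    have hmem : x₀ ∈ f.domain := by rw [hdom]; exact Submodule.mem_span_singleton_self _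
    have := hg_eq ⟨x₀, hmem⟩
    rw [this]
    exact LinearPMap.mkSpanSingleton'_apply_self _ _ _ _
  refine ⟨g, ⟨1, one_pos, fun x => by simpa using habs x⟩, ?_, hgx₀⟩
  -- bNorm = 1
  have hset : ∀ M ∈ {M : ℝ | 0 < M ∧ ∀ x, |g x| ≤ M * P.N x b}, (1:ℝ) ≤ M := by
    rintro M ⟨hM, hMx⟩
    have := hMx x₀
    rw [hgx₀, abs_of_pos hpos] at this
    nlinarith
  unfold TwoNorm.bNorm
  apply le_antisymm
  · exact csInf_le ⟨1, hset⟩ ⟨one_pos, fun x => by simpa using habs x⟩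
  · exact le_csInf ⟨1, one_pos, fun x => by simpa using habs x⟩ hset
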